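/- Let λ > 0 and assume that for every i the map ℓ_{y_i} : q ↦ ℓ(q, y_i) is differentiable on ℝ^{d_y}. Fix any θ ∈ ℝ^{d_θ} and let (a, b, W) be a local minimum of the map (a,b,W) ↦ L̃(θ,a,b,W). Then for every k ∈ {1,…,d_y}, every natural number p, and every u ∈ ℝ^{d_x}: ∑_{i=1}^m (∇ℓ_{y_i}(f(x_i;θ)))_k · exp(⟨w_k, x_i⟩ + b_k) · (⟨u, x_i⟩)^p = 0. -/

import Mathlib

open scoped RealInnerProductSpace

noncomputable section

/-- The added neuron: `g(x; a, b, W)ₖ = aₖ · exp(⟨wₖ, x⟩ + bₖ)`. -/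
def addedNeuron (dx dy : ℕ) (a b : EuclideanSpace ℝ (Fin dy))
    (W : Fin dy → EuclideanSpace ℝ (Fin dx)) (x : EuclideanSpace ℝ (Fin dx)) :
    EuclideanSpace ℝ (Fin dy) :=
  WithLp.toLp 2 (fun k => a k * Real.exp (⟪W k, x⟫ + b k))

open Filter Topology

private lemma aux_deriv_ev_zero {h : ℝ → ℝ} {x : ℝ} (hh : h =ᶠ[𝓝 x] 0) :
    deriv h =ᶠ[𝓝 x] 0 := by
  have := hh.eventually_nhds
  filter_upwards [this] with y hy
  have : deriv h y = deriv (0 : ℝ → ℝ) y := Filter.EventuallyEq.deriv_eq hy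
  simpa [show (0:ℝ→ℝ) = fun _ => (0:ℝ) from rfl, deriv_const] using this

private lemma aux_moment_zero {m : ℕ} (c r : Fin m → ℝ)
    (h : (fun t => ∑ i, c i * Real.exp (r i * t)) =ᶠ[𝓝 (0:ℝ)] 0) (p : ℕ) :
    ∑ i, c i * r i ^ p = 0 := by
  have key : ∀ p : ℕ, (fun t => ∑ i, c i * r i ^ p * Real.exp (r i * t)) =ᶠ[𝓝 (0:ℝ)] 0 := by
    intro p
    induction p with
    | zero => simpa using h
    | succ q ih =>
      have hd : deriv (fun t => ∑ i, c i * r i ^ q * Real.exp (r i * t))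
          = fun t => ∑ i, c i * r i ^ (q+1) * Real.exp (r i * t) := by
        funext t
        have : HasDerivAt (fun t => ∑ i, c i * r i ^ q * Real.exp (r i * t))
            (∑ i, c i * r i ^ (q+1) * Real.exp (r i * t)) t := by
          apply HasDerivAt.fun_sum
          intro i _
          have h1 : HasDerivAt (fun t : ℝ => r i * t) (r i) t := by
            simpa using (hasDerivAt_id t).const_mul (r i)
          have h2 := (h1.exp).const_mul (c i * r i ^ q)
          rw [show c i * r i ^ (q+1) * Real.exp (r i * t) = c i * r i ^ q * (Real.exp (r i * t) * r i) by ring]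
          exact h2
        exact this.deriv
      have := aux_deriv_ev_zero ih
      rw [hd] at this
      exact this
  have := (key p).eq_of_nhds
  simpa using this

/-- Let `λ > 0` and each `ℓ_{y_i}` be differentiable. If `(a, b, W)` is
a local minimum of `(a,b,W) ↦ L̃(θ,a,b,W)`, then for every output coordinate `k`, every
natural number `p` and every direction `u`,
`∑ᵢ (∇ℓ_{y_i}(f(x_i;θ)))ₖ · exp(⟨wₖ, xᵢ⟩ + bₖ) · ⟨u, xᵢ⟩ᵖ = 0`. -/
theorem local_min_moment_conditions
    (m dx dy dθ : ℕ) (hm : 0 < m) (hdx : 0 < dx) (hdy : 0 < dy) (hdθ : 0 < dθ)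
    (x : Fin m → EuclideanSpace ℝ (Fin dx))
    (y : Fin m → EuclideanSpace ℝ (Fin dy))
    (f : EuclideanSpace ℝ (Fin dx) → EuclideanSpace ℝ (Fin dθ) → EuclideanSpace ℝ (Fin dy))
    (ℓ : EuclideanSpace ℝ (Fin dy) → EuclideanSpace ℝ (Fin dy) → ℝ)
    (hdiff : ∀ i : Fin m, Differentiable ℝ (fun q => ℓ q (y i)))
    (lam : ℝ) (hlam : 0 < lam)
    (Lt : EuclideanSpace ℝ (Fin dθ) → EuclideanSpace ℝ (Fin dy) → EuclideanSpace ℝ (Fin dy) →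
      (Fin dy → EuclideanSpace ℝ (Fin dx)) → ℝ)
    (hLt : ∀ θ a b W, Lt θ a b W =
      (1 / (m : ℝ)) * ∑ i, ℓ (f (x i) θ + addedNeuron dx dy a b W (x i)) (y i)
        + lam * ‖a‖ ^ 2)
    (θ : EuclideanSpace ℝ (Fin dθ)) (a b : EuclideanSpace ℝ (Fin dy))
    (W : Fin dy → EuclideanSpace ℝ (Fin dx))
    (hmin : IsLocalMin (fun p : EuclideanSpace ℝ (Fin dy) × EuclideanSpace ℝ (Fin dy) ×
        (Fin dy → EuclideanSpace ℝ (Fin dx)) =>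
        Lt θ p.1 p.2.1 p.2.2) (a, b, W)) :
    ∀ (k : Fin dy) (p : ℕ) (u : EuclideanSpace ℝ (Fin dx)),
      ∑ i, (gradient (fun q => ℓ q (y i)) (f (x i) θ)) k *
        Real.exp (⟪W k, x i⟫ + b k) * (⟪u, x i⟫ : ℝ) ^ p = 0 := by
  classical
  have hm' : (m : ℝ) ≠ 0 := Nat.cast_ne_zero.mpr hm.ne'
  set F := fun p : EuclideanSpace ℝ (Fin dy) × EuclideanSpace ℝ (Fin dy) ×
      (Fin dy → EuclideanSpace ℝ (Fin dx)) => Lt θ p.1 p.2.1 p.2.2 with hF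
  -- Step 1 : `a = 0`.
  have ha : a = 0 := by
    by_contra hne
    have hN : (0:ℝ) < ‖a‖ ^ 2 := by
      have : 0 < ‖a‖ := norm_pos_iff.mpr hne
      positivity
    set o : EuclideanSpace ℝ (Fin dy) := WithLp.toLp 2 (fun _ => (1:ℝ)) with ho
    set γ : ℝ → EuclideanSpace ℝ (Fin dy) × EuclideanSpace ℝ (Fin dy) ×
        (Fin dy → EuclideanSpace ℝ (Fin dx)) :=
      fun s => (Real.exp (-s) • a, b + s • o, W) with hγ
    have hγc : Continuous γ := by
      refine Continuous.prodMk ?_ (Continuous.prodMk ?_ continuous_const)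
      · exact ((Real.continuous_exp.comp continuous_neg).smul continuous_const)
      · exact continuous_const.add (continuous_id.smul continuous_const)
    have hγ0 : γ 0 = (a, b, W) := by
      simp [hγ]
    have hcomp : IsLocalMin (F ∘ γ) 0 := by
      rw [← hγ0] at hmin
      exact hmin.comp_tendsto hγc.continuousAt.tendsto
    have heq : ∀ s : ℝ, (F ∘ γ) s = Lt θ a b W + lam * ((Real.exp (-s))^2 - 1) * ‖a‖^2 := by
      intro s
      have hg : ∀ i, addedNeuron dx dy (Real.exp (-s) • a) (b + s • o) W (x i)
          = addedNeuron dx dy a b W (x i) := by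
        intro i
        ext j
        simp only [addedNeuron, PiLp.toLp_apply, PiLp.smul_apply, PiLp.add_apply, smul_eq_mul]
        have h1 : o j = 1 := rfl
        have h2 : Real.exp (-s) * Real.exp s = 1 := by
          rw [← Real.exp_add]; simp
        rw [h1, show ⟪W j, x i⟫ + (b j + s * 1) = s + (⟪W j, x i⟫ + b j) by ring,
          Real.exp_add]
        linear_combination (a j * Real.exp (⟪W j, x i⟫ + b j)) * h2
      have hnrm : ‖Real.exp (-s) • a‖ ^ 2 = (Real.exp (-s))^2 * ‖a‖^2 := by
        rw [norm_smul, Real.norm_eq_abs, abs_of_pos (Real.exp_pos _), mul_pow]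
      show Lt θ (Real.exp (-s) • a) (b + s • o) W = _
      rw [hLt, hLt]
      simp only [hg, hnrm]
      ring
    have hev : ∀ᶠ s in 𝓝[>] (0:ℝ), (F ∘ γ) 0 ≤ (F ∘ γ) s :=
      hcomp.filter_mono nhdsWithin_le_nhds
    obtain ⟨s, hs, hspos⟩ := (hev.and eventually_mem_nhdsWithin).exists
    rw [heq 0, heq s] at hs
    have hlt : Real.exp (-s) < 1 := Real.exp_lt_one_iff.mpr (by simpa using hspos)
    have hpos : 0 < Real.exp (-s) := Real.exp_pos _
    have h0 : Real.exp (-(0:ℝ)) = 1 := by simp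
    rw [h0] at hs
    have hsq : Real.exp (-s) ^ 2 < 1 := by nlinarith
    nlinarith [mul_pos hlam hN, hsq, hs]
  subst ha
  intro k p u
  set grad : Fin m → EuclideanSpace ℝ (Fin dy) :=
    fun i => gradient (fun q => ℓ q (y i)) (f (x i) θ) with hgrad
  set c : Fin m → ℝ := fun i => grad i k * Real.exp (⟪W k, x i⟫ + b k) with hc
  set r : Fin m → ℝ := fun i => (⟪u, x i⟫ : ℝ) with hr
  set ek : EuclideanSpace ℝ (Fin dy) := EuclideanSpace.single k (1:ℝ) with hek
  -- the objective does not depend on `W'` when `a = 0`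
  have hzero : ∀ W' : Fin dy → EuclideanSpace ℝ (Fin dx), Lt θ 0 b W' = Lt θ 0 b W := by
    intro W'
    have hA : ∀ (W'' : Fin dy → EuclideanSpace ℝ (Fin dx)) i,
        addedNeuron dx dy (0 : EuclideanSpace ℝ (Fin dy)) b W'' (x i)
          = (0 : EuclideanSpace ℝ (Fin dy)) := by
      intro W'' i
      ext j
      simp [addedNeuron]
    rw [hLt, hLt]
    simp [hA]
  set Φ : ℝ × ℝ → EuclideanSpace ℝ (Fin dy) × EuclideanSpace ℝ (Fin dy) ×
      (Fin dy → EuclideanSpace ℝ (Fin dx)) :=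
    fun q => (q.2 • ek, b, fun j => W j + q.1 • u) with hΦ
  have hΦc : Continuous Φ := by
    refine Continuous.prodMk ?_ (Continuous.prodMk continuous_const ?_)
    · exact continuous_snd.smul continuous_const
    · exact continuous_pi fun j => continuous_const.add (continuous_fst.smul continuous_const)
  have hΦ0 : Φ (0, 0) = ((0 : EuclideanSpace ℝ (Fin dy)), b, W) := by
    simp [hΦ]
  have hlm : IsLocalMin (F ∘ Φ) (0, 0) := by
    rw [← hΦ0] at hmin
    exact hmin.comp_tendsto hΦc.continuousAt.tendsto
  have hcurry : ∀ᶠ t in 𝓝 (0:ℝ), ∀ᶠ ε in 𝓝 (0:ℝ),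
      F (Φ (0,0)) ≤ F (Φ (t, ε)) := by
    have h1 : ∀ᶠ q in 𝓝 ((0:ℝ), (0:ℝ)), F (Φ (0,0)) ≤ F (Φ q) := hlm
    rw [nhds_prod_eq] at h1
    exact h1.curry
  -- eventually in `t`, the sum identity holds
  have hFev : (fun t => ∑ i, c i * Real.exp (r i * t)) =ᶠ[𝓝 (0:ℝ)] 0 := by
    filter_upwards [hcurry] with t ht
    set Wt : Fin dy → EuclideanSpace ℝ (Fin dx) := fun j => W j + t • u with hWt
    -- local min in ε
    have h0 : F (Φ (t, 0)) = F (Φ (0, 0)) := by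
      simp only [hΦ, hF, zero_smul, add_zero]
      exact (hzero _).trans (hzero _).symm
    have hloc : IsLocalMin (fun ε : ℝ => F (Φ (t, ε))) 0 := by
      show ∀ᶠ ε in 𝓝 (0:ℝ), F (Φ (t, 0)) ≤ F (Φ (t, ε))
      rw [h0]
      exact ht
    have hder0 : deriv (fun ε : ℝ => F (Φ (t, ε))) 0 = 0 := hloc.deriv_eq_zero
    -- compute the derivative
    have hrep : ∀ ε : ℝ, F (Φ (t, ε)) =
        (1 / (m : ℝ)) * ∑ i, ℓ (f (x i) θ +
          ε • ((Real.exp (⟪W k, x i⟫ + b k) * Real.exp (r i * t)) • ek)) (y i)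
          + lam * ε ^ 2 := by
      intro ε
      show Lt θ (ε • ek) b Wt = _
      rw [hLt]
      congr 1
      · congr 1
        apply Finset.sum_congr rfl
        intro i _
        congr 1
        congr 1
        ext j
        simp only [addedNeuron, PiLp.toLp_apply, PiLp.smul_apply, smul_eq_mul, hek,
          EuclideanSpace.single_apply]
        by_cases hj : j = k
        · subst hj
          simp only [if_pos rfl, hWt]
          rw [inner_add_left, real_inner_smul_left]
          rw [show ⟪W j, x i⟫ + t * ⟪u, x i⟫ + b j = (⟪W j, x i⟫ + b j) + (⟪u, x i⟫ * t) by ring,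
            Real.exp_add]
          simp only [hr]
          ring
        · simp [hj]
      · rw [norm_smul, Real.norm_eq_abs]
        simp only [hek, EuclideanSpace.norm_single, norm_one, mul_one, sq_abs]
    have hder : HasDerivAt (fun ε : ℝ => F (Φ (t, ε)))
        ((1 / (m : ℝ)) * ∑ i, (Real.exp (⟪W k, x i⟫ + b k) * Real.exp (r i * t)) * grad i k) 0 := by
      have hsum : HasDerivAt (fun ε : ℝ => ∑ i, ℓ (f (x i) θ +
          ε • ((Real.exp (⟪W k, x i⟫ + b k) * Real.exp (r i * t)) • ek)) (y i))
          (∑ i, (Real.exp (⟪W k, x i⟫ + b k) * Real.exp (r i * t)) * grad i k) 0 := by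
        apply HasDerivAt.fun_sum
        intro i _
        set v : ℝ := Real.exp (⟪W k, x i⟫ + b k) * Real.exp (r i * t) with hv
        have hgi : HasGradientAt (fun q => ℓ q (y i)) (grad i) (f (x i) θ) :=
          ((hdiff i) (f (x i) θ)).hasGradientAt
        have hfd : HasFDerivAt (fun q => ℓ q (y i))
            (InnerProductSpace.toDual ℝ _ (grad i)) (f (x i) θ) :=
          hasGradientAt_iff_hasFDerivAt.mp hgi
        have hlin : HasDerivAt (fun ε : ℝ => f (x i) θ + ε • (v • ek)) (v • ek) 0 := by
          have := ((hasDerivAt_id (0:ℝ)).smul_const (v • ek)).const_add (f (x i) θ)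
          simpa using this
        have hfd' : HasFDerivAt (fun q => ℓ q (y i))
            (InnerProductSpace.toDual ℝ _ (grad i)) (f (x i) θ + (0:ℝ) • (v • ek)) := by
          simpa using hfd
        have hcomp2 := hfd'.comp_hasDerivAt 0 hlin
        have hval : (InnerProductSpace.toDual ℝ _ (grad i)) (v • ek) = v * grad i k := by
          rw [InnerProductSpace.toDual_apply_apply, real_inner_smul_right]
          congr 1
          simp [hek, EuclideanSpace.inner_single_right]
        rw [hval] at hcomp2
        simpa [Function.comp_def, smul_smul] using hcomp2
      have hquad : HasDerivAt (fun ε : ℝ => lam * ε ^ 2) 0 0 := by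
        have := (hasDerivAt_pow 2 (0:ℝ)).const_mul lam
        simpa using this
      have := ((hsum.const_mul ((1:ℝ) / m)).fun_add hquad)
      have heq2 : (fun ε : ℝ => (1 / (m : ℝ)) * ∑ i, ℓ (f (x i) θ +
          ε • ((Real.exp (⟪W k, x i⟫ + b k) * Real.exp (r i * t)) • ek)) (y i)
          + lam * ε ^ 2) = fun ε : ℝ => F (Φ (t, ε)) := by
        funext ε
        rw [hrep ε]
      rw [heq2] at this
      simpa using this
    have hD := hder.deriv
    rw [hder0] at hD
    have hS : ∑ i, (Real.exp (⟪W k, x i⟫ + b k) * Real.exp (r i * t)) * grad i k = 0 :=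
      (mul_eq_zero.mp hD.symm).resolve_left (one_div_ne_zero hm')
    show ∑ i, c i * Real.exp (r i * t) = (0 : ℝ → ℝ) t
    rw [show ((0 : ℝ → ℝ) t) = (0:ℝ) from rfl, ← hS]
    apply Finset.sum_congr rfl
    intro i _
    simp only [hc]
    ring
  have := aux_moment_zero c r hFev p
  convert this using 1
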